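/- Let (G,σ) be a signed graph with χ((G,σ)) = t + 1. Then χ_c((G,σ)) = t if and only if (G,σ) has a (2t, 2)-coloring. -/

import Mathlib

/-- For `m > 0` and `m ∤ a`, `a / m + (-a) / m = -1`. -/
lemma ediv_add_neg_ediv {m a : ℤ} (hm : 0 < m) (h : ¬ m ∣ a) : a / m + (-a) / m = -1 := by
  have h1 : m * (a / m) + a % m = a := Int.mul_ediv_add_emod a m
  have h2 : 0 ≤ a % m := Int.emod_nonneg a (ne_of_gt hm)
  have h3 : a % m < m := Int.emod_lt_of_pos a hm
  have h4 : 0 < a % m := lt_of_le_of_ne h2 (fun hz => h (Int.dvd_of_emod_eq_zero hz.symm))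
  have h5 : -a = (m - a % m) + (-(a / m) - 1) * m := by linarith
  have hz : (m - a % m) / m = 0 := Int.ediv_eq_zero_of_lt (by linarith) (by linarith)
  calc a / m + (-a) / m = a / m + ((m - a % m) + (-(a / m) - 1) * m) / m := by rw [← h5]
    _ = a / m + ((m - a % m) / m + (-(a / m) - 1)) := by
        rw [Int.add_mul_ediv_right _ _ (ne_of_gt hm)]
    _ = -1 := by rw [hz]; ring

/-- Bridge between the `ZMod.val` form of the coloring condition and integer `emod`
inequalities. -/
lemma cond_intCast_iff (k d : ℕ) (hk : 0 < k) (hd : 0 < d) (ε A B : ℤ) :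
    (d ≤ min (ZMod.val ((A : ZMod k) - (ε : ZMod k) * (B : ZMod k)))
        (ZMod.val (-((A : ZMod k) - (ε : ZMod k) * (B : ZMod k))))) ↔
    ((d : ℤ) ≤ (A - ε * B) % k ∧ (A - ε * B) % k ≤ (k : ℤ) - d) := by
  haveI : NeZero k := ⟨hk.ne'⟩
  have hc1 : (A : ZMod k) - (ε : ZMod k) * (B : ZMod k) = (((A - ε * B) : ℤ) : ZMod k) := by
    push_cast; ring
  have hc2 : -((((A - ε * B) : ℤ)) : ZMod k) = (((-(A - ε * B)) : ℤ) : ZMod k) := by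
    push_cast; ring
  rw [hc1, hc2]
  set N := A - ε * B with hN
  have v1 : (ZMod.val ((N : ZMod k)) : ℤ) = N % k := ZMod.val_intCast N
  have v2 : (ZMod.val (((-N : ℤ) : ZMod k)) : ℤ) = (-N) % k := ZMod.val_intCast (-N)
  have hr0 : 0 ≤ N % k := Int.emod_nonneg N (by exact_mod_cast hk.ne')
  have hrk : N % k < k := Int.emod_lt_of_pos N (by exact_mod_cast hk)
  have hr0' : 0 ≤ (-N) % k := Int.emod_nonneg (-N) (by exact_mod_cast hk.ne')
  have hrk' : (-N) % k < k := Int.emod_lt_of_pos (-N) (by exact_mod_cast hk)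
  have hsum : ((N % k) + ((-N) % k)) % k = 0 := by
    rw [← Int.add_emod]; simp
  obtain ⟨c, hc⟩ := Int.dvd_of_emod_eq_zero hsum
  have hkz : (0:ℤ) < k := by exact_mod_cast hk
  have hc01 : c = 0 ∨ c = 1 := by
    rcases lt_trichotomy c 0 with h | h | h
    · nlinarith
    · left; exact h
    · right; nlinarith
  rw [le_min_iff]
  constructor
  · rintro ⟨ha, hb⟩
    have ha' : (d : ℤ) ≤ N % k := by rw [← v1]; exact_mod_cast ha
    have hb' : (d : ℤ) ≤ (-N) % k := by rw [← v2]; exact_mod_cast hb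
    rcases hc01 with rfl | rfl <;> simp only [mul_zero, mul_one] at hc <;> constructor <;> omega
  · rintro ⟨ha, hb⟩
    have hne : N % k ≠ 0 := by omega
    have hc1' : c = 1 := by
      rcases hc01 with h | h
      · exfalso; rw [h, mul_zero] at hc; omega
      · exact h
    subst hc1'
    constructor
    · have : (d : ℤ) ≤ (ZMod.val ((N : ZMod k)) : ℤ) := by rw [v1]; omega
      exact_mod_cast this
    · have : (d : ℤ) ≤ (ZMod.val (((-N : ℤ) : ZMod k)) : ℤ) := by rw [v2]; omega
      exact_mod_cast this


/-- The strict-ratio transfer map. -/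
def Fstrict (k k' z : ℤ) : ℤ := (2 * k' * z + k - 1) / (2 * k)

lemma core_strict (k d k' d' : ℕ) (hk : 0 < k) (hd : 0 < d) (hk' : 0 < k') (hd' : 0 < d')
    (hstrict : k * d' < k' * d) (ε : ℤ) (hε : ε = 1 ∨ ε = -1) (X Y : ℤ)
    (h1 : (d : ℤ) ≤ (X - ε * Y) % k) (h2 : (X - ε * Y) % k ≤ (k : ℤ) - d) :
    (d' : ℤ) ≤ (Fstrict k k' X - ε * Fstrict k k' Y) % k' ∧
      (Fstrict k k' X - ε * Fstrict k k' Y) % k' ≤ (k' : ℤ) - d' := by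
  have hkz : (0:ℤ) < k := by exact_mod_cast hk
  have hdz : (0:ℤ) < d := by exact_mod_cast hd
  have hkz' : (0:ℤ) < k' := by exact_mod_cast hk'
  have hdz' : (0:ℤ) < d' := by exact_mod_cast hd'
  have hs : (k:ℤ) * d' + 1 ≤ (k':ℤ) * d := by exact_mod_cast hstrict
  set u : ℤ := (X - ε * Y) % k with hu
  set q : ℤ := (X - ε * Y) / k with hq
  have hqu : (k:ℤ) * q + u = X - ε * Y := Int.mul_ediv_add_emod _ _
  set RX : ℤ := (2 * k' * X + k - 1) % (2 * k) with hRX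
  set RY : ℤ := (2 * k' * Y + k - 1) % (2 * k) with hRY
  have eX : (2*(k:ℤ)) * (Fstrict k k' X) + RX = 2 * k' * X + k - 1 := Int.mul_ediv_add_emod _ _
  have eY : (2*(k:ℤ)) * (Fstrict k k' Y) + RY = 2 * k' * Y + k - 1 := Int.mul_ediv_add_emod _ _
  have hRX0 : 0 ≤ RX := Int.emod_nonneg _ (by positivity)
  have hRXk : RX < 2*k := Int.emod_lt_of_pos _ (by positivity)
  have hRY0 : 0 ≤ RY := Int.emod_nonneg _ (by positivity)
  have hRYk : RY < 2*k := Int.emod_lt_of_pos _ (by positivity)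
  have hud : 2*(k':ℤ)*d ≤ 2*k'*u := mul_le_mul_of_nonneg_left h1 (by positivity)
  have huk : 2*(k':ℤ)*u ≤ 2*k'*((k:ℤ) - d) := mul_le_mul_of_nonneg_left h2 (by positivity)
  rcases hε with rfl | rfl
  · -- ε = 1
    set NL : ℤ := Fstrict k k' X - Fstrict k k' Y - k' * q with hNL
    have h' : (2:ℤ)*k'*(X - 1*Y) = 2*k'*((k:ℤ)*q + u) := by rw [hqu]
    have key : (2*(k:ℤ)) * NL = 2*k'*u + RY - RX := by
      rw [hNL]; linear_combination eX - eY + h'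
    have hlow : (d' : ℤ) ≤ NL := by
      have h3 : (2*(k:ℤ))*((d':ℤ)-1) < (2*(k:ℤ))*NL := by rw [key]; linarith
      have h4 := lt_of_mul_lt_mul_left h3 (by positivity : (0:ℤ) ≤ 2*(k:ℤ))
      linarith
    have hhigh : NL ≤ (k' : ℤ) - d' := by
      have h3 : (2*(k:ℤ))*NL < (2*(k:ℤ))*((k':ℤ) - d' + 1) := by rw [key]; linarith
      have h4 := lt_of_mul_lt_mul_left h3 (by positivity : (0:ℤ) ≤ 2*(k:ℤ))
      linarith
    have hrw : Fstrict k k' X - 1 * Fstrict k k' Y = NL + k' * q := by rw [hNL]; ring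
    rw [hrw, Int.add_mul_emod_self_left, Int.emod_eq_of_lt (by linarith) (by linarith)]
    exact ⟨hlow, hhigh⟩
  · -- ε = -1
    set NL : ℤ := Fstrict k k' X + Fstrict k k' Y - k' * q with hNL
    have h' : (2:ℤ)*k'*(X - (-1)*Y) = 2*k'*((k:ℤ)*q + u) := by rw [hqu]
    have key : (2*(k:ℤ)) * NL = 2*k'*u + (2*(k:ℤ) - 2 - RX - RY) := by
      rw [hNL]; linear_combination eX + eY + h'
    have hlow : (d' : ℤ) ≤ NL := by
      have h3 : (2*(k:ℤ))*((d':ℤ)-1) < (2*(k:ℤ))*NL := by rw [key]; linarith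
      have h4 := lt_of_mul_lt_mul_left h3 (by positivity : (0:ℤ) ≤ 2*(k:ℤ))
      linarith
    have hhigh : NL ≤ (k' : ℤ) - d' := by
      have h3 : (2*(k:ℤ))*NL < (2*(k:ℤ))*((k':ℤ) - d' + 1) := by rw [key]; linarith
      have h4 := lt_of_mul_lt_mul_left h3 (by positivity : (0:ℤ) ≤ 2*(k:ℤ))
      linarith
    have hrw : Fstrict k k' X - (-1) * Fstrict k k' Y = NL + k' * q := by rw [hNL]; ring
    rw [hrw, Int.add_mul_emod_self_left, Int.emod_eq_of_lt (by linarith) (by linarith)]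
    exact ⟨hlow, hhigh⟩


/-- The equal-ratio ("tight") transfer map `Z_{td} → Z_{2t}`. -/
def Feq (dz z : ℤ) : ℤ := (2 * z + 1) / (2 * dz) + (2 * z - 1) / (2 * dz) + 1

lemma not_dvd_odd {dz y : ℤ} (hd : 0 < dz) : ¬ (2 * dz ∣ 2 * y + 1) := by
  rintro ⟨c, hc⟩
  have h2 : 2 * y + 1 = 2 * (dz * c) := by linarith [hc]
  omega

lemma not_dvd_odd' {dz y : ℤ} (hd : 0 < dz) : ¬ (2 * dz ∣ 2 * y - 1) := by
  rintro ⟨c, hc⟩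
  have h2 : 2 * y - 1 = 2 * (dz * c) := by linarith [hc]
  omega

lemma Feq_neg {dz : ℤ} (hd : 0 < dz) (z : ℤ) : Feq dz (-z) = - Feq dz z := by
  have a1 := ediv_add_neg_ediv (m := 2 * dz) (a := 2 * z + 1) (by positivity) (not_dvd_odd hd)
  have a2 := ediv_add_neg_ediv (m := 2 * dz) (a := 2 * z - 1) (by positivity) (not_dvd_odd' hd)
  have r1 : 2 * (-z) + 1 = -(2 * z - 1) := by ring
  have r2 : 2 * (-z) - 1 = -(2 * z + 1) := by ring
  unfold Feq
  rw [r1, r2]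
  linarith

lemma core_eq_pos (t d : ℕ) (ht : 0 < t) (hd : 0 < d) (X Y : ℤ)
    (h1 : (d : ℤ) ≤ (X - Y) % ((t : ℤ) * d)) (h2 : (X - Y) % ((t : ℤ) * d) ≤ (t : ℤ) * d - d) :
    (2 : ℤ) ≤ (Feq d X - Feq d Y) % (2 * t) ∧ (Feq d X - Feq d Y) % (2 * t) ≤ 2 * t - 2 := by
  have htz : (0:ℤ) < t := by exact_mod_cast ht
  have hdz : (0:ℤ) < d := by exact_mod_cast hd
  set u : ℤ := (X - Y) % ((t : ℤ) * d) with hu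
  set q : ℤ := (X - Y) / ((t : ℤ) * d) with hq
  have hqu : ((t:ℤ) * d) * q + u = X - Y := Int.mul_ediv_add_emod _ _
  -- first bracket, numerator 2Y+1
  set A : ℤ := 2 * Y + 1 with hA
  set QA : ℤ := A / (2 * d) with hQA
  set RA : ℤ := A % (2 * d) with hRA
  have eA : (2*(d:ℤ)) * QA + RA = A := Int.mul_ediv_add_emod _ _
  have hRA0 : 0 ≤ RA := Int.emod_nonneg _ (by positivity)
  have hRAk : RA < 2*d := Int.emod_lt_of_pos _ (by positivity)
  -- second bracket, numerator 2Y-1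
  set B : ℤ := 2 * Y - 1 with hB
  set QB : ℤ := B / (2 * d) with hQB
  set RB : ℤ := B % (2 * d) with hRB
  have eB : (2*(d:ℤ)) * QB + RB = B := Int.mul_ediv_add_emod _ _
  have hRB0 : 0 ≤ RB := Int.emod_nonneg _ (by positivity)
  have hRBk : RB < 2*d := Int.emod_lt_of_pos _ (by positivity)
  -- rewrite numerators at X
  have cX1 : (2 * X + 1) / (2 * (d:ℤ)) = (A + 2*u) / (2*(d:ℤ)) + t * q := by
    rw [show 2 * X + 1 = (A + 2*u) + ((t:ℤ) * q) * (2 * d) by rw [hA]; linarith [hqu]]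
    exact Int.add_mul_ediv_right _ _ (by positivity)
  have cX2 : (2 * X - 1) / (2 * (d:ℤ)) = (B + 2*u) / (2*(d:ℤ)) + t * q := by
    rw [show 2 * X - 1 = (B + 2*u) + ((t:ℤ) * q) * (2 * d) by rw [hB]; linarith [hqu]]
    exact Int.add_mul_ediv_right _ _ (by positivity)
  -- bounds for the deltas
  have dA_low : QA + 1 ≤ (A + 2*u) / (2*(d:ℤ)) := by
    have : (QA + 1) * (2*(d:ℤ)) ≤ A + 2*u := by linarith
    exact (Int.le_ediv_iff_mul_le (by positivity)).mpr this
  have dA_high : (A + 2*u) / (2*(d:ℤ)) ≤ QA + t - 1 := by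
    have : A + 2*u < (QA + t) * (2*(d:ℤ)) := by nlinarith
    have h' := (Int.ediv_lt_iff_lt_mul (by positivity : (0:ℤ) < 2*d)).mpr this
    linarith
  have dB_low : QB + 1 ≤ (B + 2*u) / (2*(d:ℤ)) := by
    have : (QB + 1) * (2*(d:ℤ)) ≤ B + 2*u := by linarith
    exact (Int.le_ediv_iff_mul_le (by positivity)).mpr this
  have dB_high : (B + 2*u) / (2*(d:ℤ)) ≤ QB + t - 1 := by
    have : B + 2*u < (QB + t) * (2*(d:ℤ)) := by nlinarith
    have h' := (Int.ediv_lt_iff_lt_mul (by positivity : (0:ℤ) < 2*d)).mpr this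
    linarith
  -- assemble
  set NL : ℤ := ((A + 2*u) / (2*(d:ℤ)) - QA) + ((B + 2*u) / (2*(d:ℤ)) - QB) with hNL
  have hNL2 : 2 ≤ NL := by rw [hNL]; linarith
  have hNLt : NL ≤ 2*(t:ℤ) - 2 := by rw [hNL]; linarith
  have hFdiff : Feq d X - Feq d Y = NL + (2*(t:ℤ)) * q := by
    unfold Feq
    rw [cX1, cX2, hNL, hQA, hQB, hA, hB]
    ring
  rw [hFdiff, Int.add_mul_emod_self_left, Int.emod_eq_of_lt (by linarith) (by linarith)]
  exact ⟨hNL2, hNLt⟩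


lemma core_eq' (t d : ℕ) (ht : 0 < t) (hd : 0 < d) (ε : ℤ) (hε : ε = 1 ∨ ε = -1) (X Y : ℤ)
    (h1 : (d : ℤ) ≤ (X - ε * Y) % ((t * d : ℕ) : ℤ))
    (h2 : (X - ε * Y) % ((t * d : ℕ) : ℤ) ≤ ((t * d : ℕ) : ℤ) - d) :
    ((2 : ℕ) : ℤ) ≤ (Feq d X - ε * Feq d Y) % ((2 * t : ℕ) : ℤ) ∧
      (Feq d X - ε * Feq d Y) % ((2 * t : ℕ) : ℤ) ≤ ((2 * t : ℕ) : ℤ) - 2 := by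
  have hcast : ((t * d : ℕ) : ℤ) = (t : ℤ) * d := by push_cast; ring
  have hcast2 : ((2 * t : ℕ) : ℤ) = 2 * (t : ℤ) := by push_cast; ring
  rw [hcast] at h1 h2
  rw [hcast2]
  have hdz : (0:ℤ) < d := by exact_mod_cast hd
  rcases hε with rfl | rfl
  · rw [one_mul] at h1 h2 ⊢
    exact core_eq_pos t d ht hd X Y h1 h2
  · have h1' : (d : ℤ) ≤ (X - (-Y)) % ((t : ℤ) * d) := by
      rw [show X - (-Y) = X - (-1) * Y by ring]; exact h1
    have h2' : (X - (-Y)) % ((t : ℤ) * d) ≤ (t : ℤ) * d - d := by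
      rw [show X - (-Y) = X - (-1) * Y by ring]; exact h2
    have hres := core_eq_pos t d ht hd X (-Y) h1' h2'
    rw [show Feq (d:ℤ) X - (-1) * Feq (d:ℤ) Y = Feq d X - Feq d (-Y) by
      rw [Feq_neg hdz]; ring]
    exact hres

/-- Transfer a coloring condition through an integer map with a suitable core property. -/
lemma cond_map {k d k' d' : ℕ} (hk : 0 < k) (hd : 0 < d) (hk' : 0 < k') (hd' : 0 < d')
    (F : ℤ → ℤ) (ε : ℤ)
    (hcore : ∀ X Y : ℤ, (d : ℤ) ≤ (X - ε * Y) % k → (X - ε * Y) % k ≤ (k : ℤ) - d →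
      (d' : ℤ) ≤ (F X - ε * F Y) % k' ∧ (F X - ε * F Y) % k' ≤ (k' : ℤ) - d')
    (x y : ZMod k)
    (h : d ≤ min (ZMod.val (x - (ε : ZMod k) * y)) (ZMod.val (-(x - (ε : ZMod k) * y)))) :
    d' ≤ min
      (ZMod.val (((F (x.val) : ℤ) : ZMod k') - (ε : ZMod k') * ((F (y.val) : ℤ) : ZMod k')))
      (ZMod.val (-(((F (x.val) : ℤ) : ZMod k') - (ε : ZMod k') * ((F (y.val) : ℤ) : ZMod k')))) := by
  haveI : NeZero k := ⟨hk.ne'⟩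
  have ex : (((x.val : ℤ)) : ZMod k) = x := by
    rw [Int.cast_natCast]; exact ZMod.natCast_rightInverse x
  have ey : (((y.val : ℤ)) : ZMod k) = y := by
    rw [Int.cast_natCast]; exact ZMod.natCast_rightInverse y
  rw [← ex, ← ey, cond_intCast_iff k d hk hd] at h
  obtain ⟨hA, hB⟩ := hcore _ _ h.1 h.2
  exact (cond_intCast_iff k' d' hk' hd' ε (F x.val) (F y.val)).mpr ⟨hA, hB⟩

variable {V : Type*}

/-- A signature of a graph `G`: a symmetric function assigning `+1` or `-1` to each edge. -/
def IsSignature (G : SimpleGraph V) (σ : V → V → ℤ) : Prop :=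
  (∀ v w, σ v w = σ w v) ∧ ∀ v w, G.Adj v w → σ v w = 1 ∨ σ v w = -1

/-- `c : V → ZMod k` is a `(k,d)`-coloring of the signed graph `(G,σ)`:
for every edge `vw`, `|c v - σ(vw) * c w|_k ≥ d`, where `|x|_k = min([x]_k, [-x]_k)`. -/
def IsKDColoring (G : SimpleGraph V) (σ : V → V → ℤ) (k d : ℕ) (c : V → ZMod k) : Prop :=
  ∀ v w, G.Adj v w →
    d ≤ min (ZMod.val (c v - (σ v w : ZMod k) * c w))
            (ZMod.val (-(c v - (σ v w : ZMod k) * c w)))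

/-- `(G,σ)` has a `(k,d)`-coloring (with the standing assumptions `k,d ≥ 1`, `k ≥ 2d`). -/
def HasKDColoring (G : SimpleGraph V) (σ : V → V → ℤ) (k d : ℕ) : Prop :=
  0 < k ∧ 0 < d ∧ 2 * d ≤ k ∧ ∃ c : V → ZMod k, IsKDColoring G σ k d c

/-- The circular chromatic number of a signed graph: the infimum of `k/d` over all
pairs `(k,d)` for which a `(k,d)`-coloring exists. -/
noncomputable def chiC (G : SimpleGraph V) (σ : V → V → ℤ) : ℝ :=
  sInf { r : ℝ | ∃ k d : ℕ, HasKDColoring G σ k d ∧ r = (k : ℝ) / d }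

/-- The chromatic number of a signed graph: the least `k` with a `(k,1)`-coloring. -/
noncomputable def chi (G : SimpleGraph V) (σ : V → V → ℤ) : ℕ :=
  sInf { k : ℕ | HasKDColoring G σ k 1 }

/-- Strict-ratio transfer: a `(k,d)`-coloring yields a `(k',d')`-coloring
whenever `k d' < k' d`. -/
lemma HasKD_strict {G : SimpleGraph V} {σ : V → V → ℤ} (hσ : IsSignature G σ)
    {k d k' d' : ℕ} (h : HasKDColoring G σ k d)
    (hk' : 0 < k') (hd' : 0 < d') (h2d' : 2 * d' ≤ k') (hstrict : k * d' < k' * d) :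
    HasKDColoring G σ k' d' := by
  obtain ⟨hk, hd, h2d, c, hc⟩ := h
  refine ⟨hk', hd', h2d', fun v => ((Fstrict k k' ((c v).val : ℤ) : ℤ) : ZMod k'), ?_⟩
  intro v w hadj
  exact cond_map hk hd hk' hd' (Fstrict k k') (σ v w)
    (fun X Y hX hY => core_strict k d k' d' hk hd hk' hd' hstrict (σ v w)
      (hσ.2 v w hadj) X Y hX hY) (c v) (c w) (hc v w hadj)

/-- Equal-ratio transfer: a `(td,d)`-coloring yields a `(2t,2)`-coloring. -/
lemma HasKD_eq {G : SimpleGraph V} {σ : V → V → ℤ} (hσ : IsSignature G σ)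
    {t d : ℕ} (ht : 2 ≤ t) (h : HasKDColoring G σ (t * d) d) :
    HasKDColoring G σ (2 * t) 2 := by
  obtain ⟨hk, hd, h2d, c, hc⟩ := h
  have ht0 : 0 < t := by omega
  refine ⟨by omega, by omega, by omega, fun v => ((Feq d ((c v).val : ℤ) : ℤ) : ZMod (2 * t)), ?_⟩
  intro v w hadj
  exact cond_map hk hd (by omega) (by omega) (Feq d) (σ v w)
    (fun X Y hX hY => core_eq' t d ht0 hd (σ v w) (hσ.2 v w hadj) X Y hX hY)
    (c v) (c w) (hc v w hadj)
lemma stepD {G : SimpleGraph V} {σ : V → V → ℤ} {t : ℕ} (ht : 2 ≤ t)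
    (hfin : ∀ s : Finset V, ∃ c : V → ZMod (2 * t), ∀ v ∈ s, ∀ w ∈ s, G.Adj v w →
      2 ≤ min (ZMod.val (c v - (σ v w : ZMod (2 * t)) * c w))
        (ZMod.val (-(c v - (σ v w : ZMod (2 * t)) * c w)))) :
    HasKDColoring G σ (2 * t) 2 := by
  classical
  haveI : NeZero (2 * t) := ⟨by omega⟩
  letI : TopologicalSpace (ZMod (2 * t)) := ⊥
  haveI : DiscreteTopology (ZMod (2 * t)) := ⟨rfl⟩
  haveI : CompactSpace (ZMod (2 * t)) := Finite.compactSpace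
  set Z : Finset V → Set (V → ZMod (2 * t)) := fun s =>
    {c | ∀ v ∈ s, ∀ w ∈ s, G.Adj v w →
      2 ≤ min (ZMod.val (c v - (σ v w : ZMod (2 * t)) * c w))
        (ZMod.val (-(c v - (σ v w : ZMod (2 * t)) * c w)))} with hZ
  have hdir : Directed (fun (x1 x2 : Set (V → ZMod (2*t))) => x1 ⊇ x2) Z := by
    intro s1 s2
    exact ⟨s1 ∪ s2,
      fun c hc v hv w hw hadj =>
        hc v (Finset.mem_union_left _ hv) w (Finset.mem_union_left _ hw) hadj,
      fun c hc v hv w hw hadj =>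
        hc v (Finset.mem_union_right _ hv) w (Finset.mem_union_right _ hw) hadj⟩
  have hclosed : ∀ s, IsClosed (Z s) := by
    intro s
    have : Z s = ⋂ (v ∈ s), ⋂ (w ∈ s),
        {c : V → ZMod (2*t) | G.Adj v w →
          2 ≤ min (ZMod.val (c v - (σ v w : ZMod (2 * t)) * c w))
            (ZMod.val (-(c v - (σ v w : ZMod (2 * t)) * c w)))} := by
      ext c; simp [hZ, Set.mem_iInter]
    rw [this]
    refine isClosed_iInter fun v => isClosed_iInter fun _ =>
      isClosed_iInter fun w => isClosed_iInter fun _ => ?_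
    by_cases hadj : G.Adj v w
    · have : {c : V → ZMod (2*t) | G.Adj v w →
          2 ≤ min (ZMod.val (c v - (σ v w : ZMod (2 * t)) * c w))
            (ZMod.val (-(c v - (σ v w : ZMod (2 * t)) * c w)))} =
          (fun c : V → ZMod (2*t) => (c v, c w)) ⁻¹'
            {p : ZMod (2*t) × ZMod (2*t) | 2 ≤ min (ZMod.val (p.1 - (σ v w : ZMod (2 * t)) * p.2))
              (ZMod.val (-(p.1 - (σ v w : ZMod (2 * t)) * p.2)))} := by
        ext c; simp [hadj]
      rw [this]
      exact IsClosed.preimage ((continuous_apply v).prodMk (continuous_apply w))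
        (isClosed_discrete _)
    · have : {c : V → ZMod (2*t) | G.Adj v w →
          2 ≤ min (ZMod.val (c v - (σ v w : ZMod (2 * t)) * c w))
            (ZMod.val (-(c v - (σ v w : ZMod (2 * t)) * c w)))} = Set.univ := by
        ext c; simp [hadj]
      rw [this]; exact isClosed_univ
  have hne : ∀ s, (Z s).Nonempty := fun s => hfin s
  have hcpt : ∀ s, IsCompact (Z s) := fun s => (hclosed s).isCompact
  obtain ⟨c, hc⟩ := IsCompact.nonempty_iInter_of_directed_nonempty_isCompact_isClosed
    Z hdir hne hcpt hclosed
  refine ⟨by omega, by omega, by omega, c, ?_⟩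
  intro v w hadj
  have := Set.mem_iInter.mp hc (insert v {w})
  exact this v (Finset.mem_insert_self _ _) w (by simp) hadj

open Filter Topology in
lemma stepC {G : SimpleGraph V} {σ : V → V → ℤ} (hσ : IsSignature G σ) {t : ℕ} (ht : 2 ≤ t)
    (hseq : ∀ n : ℕ, ∃ k d : ℕ, ∃ c : V → ZMod k,
      (0 < k ∧ 0 < d ∧ 2 * d ≤ k ∧ IsKDColoring G σ k d c) ∧
        (k : ℝ) / d < t + 1 / (n + 1)) :
    ∀ s : Finset V, ∃ c : V → ZMod (2 * t), ∀ v ∈ s, ∀ w ∈ s, G.Adj v w →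
      2 ≤ min (ZMod.val (c v - (σ v w : ZMod (2 * t)) * c w))
        (ZMod.val (-(c v - (σ v w : ZMod (2 * t)) * c w))) := by
  classical
  intro s
  choose k d c hprop hratio using hseq
  have hk : ∀ n, 0 < k n := fun n => (hprop n).1
  have hd : ∀ n, 0 < d n := fun n => (hprop n).2.1
  have hcol : ∀ n, IsKDColoring G σ (k n) (d n) (c n) := fun n => (hprop n).2.2.2
  set x : ℕ → (↥s) → ℝ := fun n v => ((c n v.1).val : ℝ) / (k n) with hx
  have hX : ∀ n, x n ∈ Set.pi Set.univ (fun _ : ↥s => Set.Icc (0:ℝ) 1) := by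
    intro n v _
    have hkR : (0:ℝ) < (k n : ℝ) := by exact_mod_cast hk n
    constructor
    · rw [hx]; positivity
    · rw [hx]
      haveI : NeZero (k n) := ⟨(hk n).ne'⟩
      rw [div_le_one hkR]
      exact_mod_cast (ZMod.val_lt _).le
  obtain ⟨L, hLmem, φ, hφ, htend⟩ :=
    IsCompact.tendsto_subseq (isCompact_univ_pi (fun _ : ↥s => isCompact_Icc)) hX
  -- distance bound for each approximate coloring
  have hzbound : ∀ n (v w : ↥s), G.Adj v.1 w.1 → ∀ j : ℤ,
      (d n : ℝ) / (k n) ≤ |(x n v - (σ v.1 w.1 : ℝ) * x n w) - j| := by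
    intro n v w hadj j
    haveI : NeZero (k n) := ⟨(hk n).ne'⟩
    set ε : ℤ := σ v.1 w.1 with hεdef
    have hcond := (hcol n) v.1 w.1 hadj
    have ex : ((((c n v.1).val : ℤ)) : ZMod (k n)) = c n v.1 := by
      rw [Int.cast_natCast]; exact ZMod.natCast_rightInverse _
    have ey : ((((c n w.1).val : ℤ)) : ZMod (k n)) = c n w.1 := by
      rw [Int.cast_natCast]; exact ZMod.natCast_rightInverse _
    rw [← ex, ← ey, cond_intCast_iff _ _ (hk n) (hd n)] at hcond
    set X : ℤ := ((c n v.1).val : ℤ) with hXdef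
    set Y : ℤ := ((c n w.1).val : ℤ) with hYdef
    set u : ℤ := (X - ε * Y) % (k n) with hudef
    set q : ℤ := (X - ε * Y) / (k n) with hqdef
    have hqu : ((k n : ℤ)) * q + u = X - ε * Y := Int.mul_ediv_add_emod _ _
    have hkR : (0:ℝ) < (k n : ℝ) := by exact_mod_cast hk n
    have hquR : ((k n : ℝ)) * (q : ℝ) + (u : ℝ) = (X : ℝ) - (ε : ℝ) * (Y : ℝ) := by
      exact_mod_cast congrArg (Int.cast : ℤ → ℝ) hqu
    have hxv : x n v = (X : ℝ) / (k n) := by rw [hx, hXdef]; push_cast; ring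
    have hxw : x n w = (Y : ℝ) / (k n) := by rw [hx, hYdef]; push_cast; ring
    have hreal : (x n v - (ε : ℝ) * x n w) - j = (u : ℝ) / (k n) + ((q - j : ℤ) : ℝ) := by
      rw [hxv, hxw]
      push_cast
      field_simp
      linarith [hquR]
    have hu1 : (d n : ℝ) ≤ (u : ℝ) := by exact_mod_cast hcond.1
    have hu2 : (u : ℝ) ≤ (k n : ℝ) - (d n : ℝ) := by exact_mod_cast hcond.2
    rcases le_or_gt 0 (q - j) with hqj | hqj
    · have hqjR : (0:ℝ) ≤ ((q - j : ℤ) : ℝ) := by exact_mod_cast hqj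
      have hstep : (d n : ℝ) / (k n) ≤ (x n v - (ε : ℝ) * x n w) - j := by
        rw [hreal]
        have h1 : (d n : ℝ) / (k n) ≤ (u : ℝ) / (k n) := (div_le_div_iff_of_pos_right hkR).mpr hu1
        linarith
      exact le_trans hstep (le_abs_self _)
    · have hqj1 : (q - j : ℤ) ≤ -1 := by omega
      have hqjR : ((q - j : ℤ) : ℝ) ≤ -1 := by exact_mod_cast hqj1
      have hstep : (x n v - (ε : ℝ) * x n w) - j ≤ -((d n : ℝ) / (k n)) := by
        rw [hreal]
        have h1 : (u : ℝ) / (k n) ≤ ((k n : ℝ) - d n) / (k n) := (div_le_div_iff_of_pos_right hkR).mpr hu2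
        have h2 : ((k n : ℝ) - d n) / (k n) = 1 - (d n : ℝ) / (k n) := by field_simp
        linarith
      calc (d n : ℝ) / (k n) ≤ -((x n v - (ε : ℝ) * x n w) - j) := by linarith
        _ ≤ |(x n v - (ε : ℝ) * x n w) - j| := neg_le_abs _
  -- pass to the limit
  have hlim : ∀ (v w : ↥s), G.Adj v.1 w.1 → ∀ j : ℤ,
      (1:ℝ) / t ≤ |(L v - (σ v.1 w.1 : ℝ) * L w) - j| := by
    intro v w hadj j
    set ε : ℤ := σ v.1 w.1 with hεdef
    have htv : Tendsto (fun n => x (φ n) v) atTop (𝓝 (L v)) := tendsto_pi_nhds.mp htend v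
    have htw : Tendsto (fun n => x (φ n) w) atTop (𝓝 (L w)) := tendsto_pi_nhds.mp htend w
    have hz : Tendsto (fun n => |(x (φ n) v - (ε : ℝ) * x (φ n) w) - j|) atTop
        (𝓝 |(L v - (ε : ℝ) * L w) - j|) :=
      (((htv.sub (htw.const_mul (ε : ℝ))).sub tendsto_const_nhds).abs)
    have htR : (0:ℝ) < (t:ℝ) := by exact_mod_cast (by omega : 0 < t)
    have hrhs : Tendsto (fun n : ℕ => (t:ℝ) + 1/(n+1)) atTop (𝓝 (t:ℝ)) := by
      have h0 := Tendsto.add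
        (tendsto_const_nhds : Tendsto (fun _ : ℕ => (t:ℝ)) atTop (𝓝 (t:ℝ)))
        tendsto_one_div_add_atTop_nhds_zero_nat
      simpa using h0
    have hrhs' : Tendsto (fun n : ℕ => 1/((t:ℝ) + 1/(n+1))) atTop (𝓝 (1/(t:ℝ))) := by
      have h0 := hrhs.inv₀ (ne_of_gt htR)
      simp only [one_div]
      simpa [one_div] using h0
    refine le_of_tendsto_of_tendsto' hrhs' hz ?_
    intro n
    have hb := hzbound (φ n) v w hadj j
    have hratio' := hratio (φ n)
    have hkR : (0:ℝ) < (k (φ n) : ℝ) := by exact_mod_cast hk (φ n)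
    have hdR : (0:ℝ) < (d (φ n) : ℝ) := by exact_mod_cast hd (φ n)
    have hplus : (0:ℝ) < (t:ℝ) + 1/((φ n : ℝ)+1) := by positivity
    have hplus' : (0:ℝ) < (t:ℝ) + 1/((n : ℝ)+1) := by positivity
    have h1 : (1:ℝ)/((t:ℝ) + 1/((φ n : ℝ)+1)) ≤ (d (φ n) : ℝ)/(k (φ n)) := by
      rw [div_le_div_iff₀ hplus hkR]
      rw [div_lt_iff₀ hdR] at hratio'
      nlinarith
    have h2 : (1:ℝ)/((t:ℝ) + 1/((n : ℝ)+1)) ≤ (1:ℝ)/((t:ℝ) + 1/((φ n : ℝ)+1)) := by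
      apply one_div_le_one_div_of_le hplus
      have hmono : ((n:ℝ)+1) ≤ ((φ n : ℝ)+1) := by
        have h := hφ.le_apply (x := n)
        have h2 : (n:ℝ) ≤ (φ n : ℝ) := by exact_mod_cast h
        linarith
      have : 1/((φ n : ℝ)+1) ≤ 1/((n : ℝ)+1) := by
        apply one_div_le_one_div_of_le (by positivity) hmono
      linarith
    linarith
  -- denominators of rational limit values
  set Den : ↥s → ℕ := fun v => if h : ∃ q : ℚ, L v = (q:ℝ) then h.choose.den else 1 with hDen
  set M : ℕ := ∏ v : ↥s, Den v with hM
  have hDpos : ∀ v : ↥s, 0 < Den v := by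
    intro v
    by_cases h : ∃ q : ℚ, L v = (q:ℝ)
    · simp only [hDen, dif_pos h]; exact h.choose.pos
    · simp only [hDen, dif_neg h]; norm_num
  have hMpos : 0 < M := Finset.prod_pos (fun v _ => hDpos v)
  have hKnat : 0 < t * (2 * M) := by positivity
  have hKR : (0:ℝ) < ((t * (2 * M) : ℕ) : ℝ) := by exact_mod_cast hKnat
  set N : ↥s → ℤ := fun v => round (((t * (2 * M) : ℕ) : ℝ) * L v) with hN
  have herr : ∀ v : ↥s, |((t * (2 * M) : ℕ) : ℝ) * L v - N v| < 1/2 ∨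
      ((N v : ℝ) = ((t * (2 * M) : ℕ) : ℝ) * L v) := by
    intro v
    by_cases h : ∃ q : ℚ, L v = (q:ℝ)
    · right
      set q0 : ℚ := h.choose with hq0
      have hden : Den v = q0.den := by simp only [hDen, dif_pos h]; rfl
      have hdvd : Den v ∣ M := by rw [hM]; exact Finset.dvd_prod_of_mem _ (Finset.mem_univ v)
      have hq : L v = ((q0 : ℚ) : ℝ) := h.choose_spec
      obtain ⟨m, hm⟩ := hdvd
      have hden0 : ((q0.den : ℕ) : ℝ) ≠ 0 := by
        have : 0 < q0.den := q0.pos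
        exact_mod_cast this.ne'
      have hm' : M = q0.den * m := by rw [← hden]; exact hm
      have hMR : ((M : ℕ) : ℝ) = ((q0.den : ℕ) : ℝ) * ((m : ℕ) : ℝ) := by
        exact_mod_cast congrArg (Nat.cast : ℕ → ℝ) hm'
      have hval : ((t * (2 * M) : ℕ) : ℝ) * L v = (((t:ℤ) * (2 * m) * q0.num : ℤ) : ℝ) := by
        rw [hq, Rat.cast_def]
        push_cast
        rw [hMR]
        field_simp
      simp only [hN]
      rw [hval, round_intCast]
    · left
      rcases lt_or_eq_of_le (abs_sub_round (((t * (2 * M) : ℕ) : ℝ) * L v)) with hlt | heq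
      · simp only [hN]; exact hlt
      · exfalso
        apply h
        have habs := (abs_eq (by norm_num : (0:ℝ) ≤ 1/2)).mp heq
        rcases habs with he | he
        · refine ⟨(2 * (round (((t * (2 * M) : ℕ) : ℝ) * L v)) + 1 : ℤ) / (2 * (t * (2 * M) : ℕ) : ℚ), ?_⟩
          push_cast
          rw [eq_div_iff (by positivity)]
          push_cast at he
          linarith
        · refine ⟨(2 * (round (((t * (2 * M) : ℕ) : ℝ) * L v)) - 1 : ℤ) / (2 * (t * (2 * M) : ℕ) : ℚ), ?_⟩
          push_cast
          rw [eq_div_iff (by positivity)]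
          push_cast at he
          linarith
  -- integer bounds on each edge for the rounded coloring
  have hNedge : ∀ (v w : ↥s), G.Adj v.1 w.1 →
      ((2 * M : ℕ) : ℤ) ≤ (N v - (σ v.1 w.1) * N w) % ((t * (2 * M) : ℕ) : ℤ) ∧
        (N v - (σ v.1 w.1) * N w) % ((t * (2 * M) : ℕ) : ℤ) ≤ ((t * (2 * M) : ℕ) : ℤ) - (2 * M : ℕ) := by
    intro v w hadj
    set ε : ℤ := σ v.1 w.1 with hεdef
    have hε1 : ε = 1 ∨ ε = -1 := hσ.2 _ _ hadj
    have habs : ∀ j : ℤ, ((2 * M : ℕ) : ℤ) ≤ |N v - ε * N w - ((t * (2 * M) : ℕ) : ℤ) * j| := by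
      intro j
      have hj := hlim v w hadj j
      have hscale : ((2 * M : ℕ) : ℝ) ≤
          |((t * (2 * M) : ℕ) : ℝ) * (L v - (ε:ℝ) * L w) - ((t * (2 * M) : ℕ) : ℝ) * j| := by
        have h1 : ((t * (2 * M) : ℕ) : ℝ) * (L v - (ε:ℝ) * L w) - ((t * (2 * M) : ℕ) : ℝ) * j
            = ((t * (2 * M) : ℕ) : ℝ) * ((L v - (ε:ℝ) * L w) - j) := by ring
        rw [h1, abs_mul, abs_of_pos hKR]
        have h2 := mul_le_mul_of_nonneg_left hj (le_of_lt hKR)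
        have h3 : ((t * (2 * M) : ℕ) : ℝ) * ((1:ℝ)/t) = ((2 * M : ℕ) : ℝ) := by
          have htR : ((t:ℕ):ℝ) ≠ 0 := by
            have : 0 < t := by omega
            exact_mod_cast this.ne'
          push_cast
          field_simp
        rw [h3] at h2
        exact h2
      have herrv := herr v
      have herrw := herr w
      have herr2 : |((N v : ℝ) - ε * N w) - ((t * (2 * M) : ℕ) : ℝ) * (L v - (ε:ℝ) * L w)| < 1 := by
        have hsplit : ((N v : ℝ) - ε * N w) - ((t * (2 * M) : ℕ) : ℝ) * (L v - (ε:ℝ) * L w)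
            = ((N v : ℝ) - ((t * (2 * M) : ℕ) : ℝ) * L v)
              - (ε:ℝ) * ((N w : ℝ) - ((t * (2 * M) : ℕ) : ℝ) * L w) := by ring
        rw [hsplit]
        have hev : |(N v : ℝ) - ((t * (2 * M) : ℕ) : ℝ) * L v| ≤ 1/2 := by
          rcases herrv with hv1 | hv2
          · rw [abs_sub_comm] at hv1; linarith
          · simp [hv2]
        have hew : |(N w : ℝ) - ((t * (2 * M) : ℕ) : ℝ) * L w| ≤ 1/2 := by
          rcases herrw with hw1 | hw2
          · rw [abs_sub_comm] at hw1; linarith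
          · simp [hw2]
        have hemix : |(N v : ℝ) - ((t * (2 * M) : ℕ) : ℝ) * L v| < 1/2 ∨
            |(N w : ℝ) - ((t * (2 * M) : ℕ) : ℝ) * L w| < 1/2 ∨
            (|(N v : ℝ) - ((t * (2 * M) : ℕ) : ℝ) * L v| = 0 ∧
              |(N w : ℝ) - ((t * (2 * M) : ℕ) : ℝ) * L w| = 0) := by
          rcases herrv with hv1 | hv2
          · left; rw [abs_sub_comm] at hv1; exact hv1
          · rcases herrw with hw1 | hw2
            · right; left; rw [abs_sub_comm] at hw1; exact hw1
            · right; right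
              constructor
              · simp [hv2]
              · simp [hw2]
        have hεabs : |(ε:ℝ)| = 1 := by
          rcases hε1 with he | he <;> rw [he] <;> norm_num
        calc |((N v : ℝ) - ((t * (2 * M) : ℕ) : ℝ) * L v)
              - (ε:ℝ) * ((N w : ℝ) - ((t * (2 * M) : ℕ) : ℝ) * L w)|
            ≤ |(N v : ℝ) - ((t * (2 * M) : ℕ) : ℝ) * L v|
              + |(ε:ℝ) * ((N w : ℝ) - ((t * (2 * M) : ℕ) : ℝ) * L w)| := abs_sub _ _
          _ = |(N v : ℝ) - ((t * (2 * M) : ℕ) : ℝ) * L v|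
              + |(N w : ℝ) - ((t * (2 * M) : ℕ) : ℝ) * L w| := by rw [abs_mul, hεabs, one_mul]
          _ < 1 := by
              rcases hemix with h1 | h2 | h3
              · linarith
              · linarith
              · rw [h3.1, h3.2]; norm_num
      -- combine
      have hcomb : ((2 * M : ℕ) : ℝ) - 1 < |((N v - ε * N w : ℤ) : ℝ) - ((t * (2 * M) : ℕ) : ℝ) * j| := by
        have hA : ((N v - ε * N w : ℤ) : ℝ) = (N v : ℝ) - ε * N w := by push_cast; ring
        rw [hA]
        have htri := abs_sub_abs_le_abs_sub
          (((t * (2 * M) : ℕ) : ℝ) * (L v - (ε:ℝ) * L w) - ((t * (2 * M) : ℕ) : ℝ) * j)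
          (((N v : ℝ) - ε * N w) - ((t * (2 * M) : ℕ) : ℝ) * j)
        have heq2 : (((t * (2 * M) : ℕ) : ℝ) * (L v - (ε:ℝ) * L w) - ((t * (2 * M) : ℕ) : ℝ) * j)
            - (((N v : ℝ) - ε * N w) - ((t * (2 * M) : ℕ) : ℝ) * j)
            = -((((N v : ℝ) - ε * N w)) - ((t * (2 * M) : ℕ) : ℝ) * (L v - (ε:ℝ) * L w)) := by ring
        rw [heq2, abs_neg] at htri
        linarith
      have hint : ((2 * M : ℕ) : ℤ) - 1 < |N v - ε * N w - ((t * (2 * M) : ℕ) : ℤ) * j| := by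
        have hcast : ((|N v - ε * N w - ((t * (2 * M) : ℕ) : ℤ) * j| : ℤ) : ℝ)
            = |((N v - ε * N w : ℤ) : ℝ) - ((t * (2 * M) : ℕ) : ℝ) * j| := by
          rw [Int.cast_abs]; push_cast; ring_nf
        have h5 : (((2 * M : ℕ) : ℤ) : ℝ) - 1 < ((|N v - ε * N w - ((t * (2 * M) : ℕ) : ℤ) * j| : ℤ) : ℝ) := by
          rw [hcast]; push_cast; push_cast at hcomb; linarith
        exact_mod_cast h5
      omega
    -- turn the universal bound into emod bounds
    have hK0 : (0:ℤ) < ((t * (2 * M) : ℕ) : ℤ) := by exact_mod_cast hKnat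
    have he : ((t * (2 * M) : ℕ) : ℤ) * ((N v - ε * N w) / ((t * (2 * M) : ℕ) : ℤ))
        + (N v - ε * N w) % ((t * (2 * M) : ℕ) : ℤ) = N v - ε * N w := Int.mul_ediv_add_emod _ _
    have h0r : 0 ≤ (N v - ε * N w) % ((t * (2 * M) : ℕ) : ℤ) :=
      Int.emod_nonneg _ (ne_of_gt hK0)
    have hrK : (N v - ε * N w) % ((t * (2 * M) : ℕ) : ℤ) < ((t * (2 * M) : ℕ) : ℤ) :=
      Int.emod_lt_of_pos _ hK0
    constructor
    · have h1 := habs ((N v - ε * N w) / ((t * (2 * M) : ℕ) : ℤ))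
      have heq2 : N v - ε * N w
          - ((t * (2 * M) : ℕ) : ℤ) * ((N v - ε * N w) / ((t * (2 * M) : ℕ) : ℤ))
          = (N v - ε * N w) % ((t * (2 * M) : ℕ) : ℤ) := by linarith
      rw [heq2, abs_of_nonneg h0r] at h1
      exact h1
    · have h2 := habs ((N v - ε * N w) / ((t * (2 * M) : ℕ) : ℤ) + 1)
      have heq3 : N v - ε * N w
          - ((t * (2 * M) : ℕ) : ℤ) * ((N v - ε * N w) / ((t * (2 * M) : ℕ) : ℤ) + 1)
          = (N v - ε * N w) % ((t * (2 * M) : ℕ) : ℤ) - ((t * (2 * M) : ℕ) : ℤ) := by linarith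
      rw [heq3, abs_of_nonpos (by linarith)] at h2
      linarith
  -- build the (t·2M, 2M) coloring and transfer it
  set c1 : V → ZMod (t * (2 * M)) := fun u =>
    if h : u ∈ s then ((N ⟨u, h⟩ : ℤ) : ZMod (t * (2 * M))) else 0 with hc1
  refine ⟨fun u => ((Feq (2 * M) (((c1 u).val : ℤ)) : ℤ) : ZMod (2 * t)), ?_⟩
  intro v hv w hw hadj
  have hcond1 : 2 * M ≤ min
      (ZMod.val (c1 v - (σ v w : ZMod (t * (2 * M))) * c1 w))
      (ZMod.val (-(c1 v - (σ v w : ZMod (t * (2 * M))) * c1 w))) := by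
    have hv1 : c1 v = ((N ⟨v, hv⟩ : ℤ) : ZMod (t * (2 * M))) := by rw [hc1]; exact dif_pos hv
    have hw1 : c1 w = ((N ⟨w, hw⟩ : ℤ) : ZMod (t * (2 * M))) := by rw [hc1]; exact dif_pos hw
    rw [hv1, hw1]
    exact (cond_intCast_iff (t * (2 * M)) (2 * M) hKnat (by omega) (σ v w) _ _).mpr
      (hNedge ⟨v, hv⟩ ⟨w, hw⟩ hadj)
  exact cond_map hKnat (by omega) (by omega) (by omega) (Feq (2 * M)) (σ v w)
    (fun X Y hX hY => core_eq' t (2 * M) (by omega) (by omega) (σ v w) (hσ.2 v w hadj) X Y hX hY)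
    (c1 v) (c1 w) hcond1
/-- For a signed graph with `χ((G,σ)) = t + 1`: `χ_c((G,σ)) = t` if and only if
`(G,σ)` has a `(2t,2)`-coloring. -/
theorem chiC_eq_chi_sub_one_iff
    (G : SimpleGraph V) (σ : V → V → ℤ) (hσ : IsSignature G σ)
    (t : ℕ) (hchi : chi G σ = t + 1) :
    chiC G σ = (t : ℝ) ↔ HasKDColoring G σ (2 * t) 2 := by
  classical
  have hchi' : sInf { k : ℕ | HasKDColoring G σ k 1 } = t + 1 := hchi
  have hchiC : chiC G σ = sInf { r : ℝ | ∃ k d : ℕ, HasKDColoring G σ k d ∧ r = (k : ℝ) / d } :=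
    rfl
  have hCne : { k : ℕ | HasKDColoring G σ k 1 }.Nonempty := by
    by_contra h
    rw [Set.not_nonempty_iff_eq_empty] at h
    rw [h, Nat.sInf_empty] at hchi'
    omega
  have hmem : HasKDColoring G σ (t + 1) 1 := by
    have h0 := Nat.sInf_mem hCne
    rw [hchi'] at h0
    exact h0
  have hnot : ¬ HasKDColoring G σ t 1 := by
    intro h
    have h0 := Nat.sInf_le (show t ∈ { k : ℕ | HasKDColoring G σ k 1 } from h)
    omega
  have hSne : { r : ℝ | ∃ k d : ℕ, HasKDColoring G σ k d ∧ r = (k : ℝ) / d }.Nonempty :=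
    ⟨((t + 1 : ℕ) : ℝ) / ((1 : ℕ) : ℝ), ⟨t + 1, 1, hmem, rfl⟩⟩
  have hS2 : ∀ r ∈ { r : ℝ | ∃ k d : ℕ, HasKDColoring G σ k d ∧ r = (k : ℝ) / d }, (2:ℝ) ≤ r := by
    rintro r ⟨k, d, hkd, rfl⟩
    have hd0 : 0 < d := hkd.2.1
    have h2d := hkd.2.2.1
    have hdR : (0:ℝ) < (d : ℝ) := by exact_mod_cast hd0
    rw [le_div_iff₀ hdR]
    exact_mod_cast h2d
  have hbdd : BddBelow { r : ℝ | ∃ k d : ℕ, HasKDColoring G σ k d ∧ r = (k : ℝ) / d } :=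
    ⟨2, fun r hr => hS2 r hr⟩
  constructor
  · intro hC
    have ht2 : 2 ≤ t := by
      by_contra hlt
      have ht1 : 1 ≤ t := by have := hmem.2.2.1; omega
      have htt : t = 1 := by omega
      have h2le : (2:ℝ) ≤ sInf { r : ℝ | ∃ k d : ℕ, HasKDColoring G σ k d ∧ r = (k : ℝ) / d } :=
        le_csInf hSne hS2
      rw [← hchiC, hC, htt] at h2le
      norm_num at h2le
    have hseq : ∀ n : ℕ, ∃ k d : ℕ, ∃ c : V → ZMod k,
        (0 < k ∧ 0 < d ∧ 2 * d ≤ k ∧ IsKDColoring G σ k d c) ∧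
          (k : ℝ) / d < t + 1 / (n + 1) := by
      intro n
      have hlt : sInf { r : ℝ | ∃ k d : ℕ, HasKDColoring G σ k d ∧ r = (k : ℝ) / d }
          < (t : ℝ) + 1 / (n + 1) := by
        rw [← hchiC, hC]
        have hpos : (0:ℝ) < 1 / ((n:ℝ) + 1) := by positivity
        linarith
      obtain ⟨r, ⟨k, d, hkd, rfl⟩, hr⟩ := exists_lt_of_csInf_lt hSne hlt
      obtain ⟨c, hc⟩ := hkd.2.2.2
      exact ⟨k, d, c, ⟨hkd.1, hkd.2.1, hkd.2.2.1, hc⟩, hr⟩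
    exact stepD ht2 (stepC hσ ht2 hseq)
  · intro H
    have ht2 : 2 ≤ t := by have := H.2.2.1; omega
    have htS : (t : ℝ) ∈ { r : ℝ | ∃ k d : ℕ, HasKDColoring G σ k d ∧ r = (k : ℝ) / d } :=
      ⟨2 * t, 2, H, by push_cast; ring⟩
    have hlb : ∀ r ∈ { r : ℝ | ∃ k d : ℕ, HasKDColoring G σ k d ∧ r = (k : ℝ) / d },
        (t : ℝ) ≤ r := by
      rintro r ⟨k, d, hkd, rfl⟩
      by_contra hlt
      push_neg at hlt
      have hd0 : 0 < d := hkd.2.1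
      have hdR : (0:ℝ) < (d : ℝ) := by exact_mod_cast hd0
      rw [div_lt_iff₀ hdR] at hlt
      have hkn : k < t * d := by exact_mod_cast hlt
      have hkn' : k * 1 < t * d := by omega
      exact hnot (HasKD_strict hσ hkd (by omega) (by omega) (by omega) hkn')
    rw [hchiC]
    exact le_antisymm (csInf_le hbdd htS) (le_csInf hSne hlb)
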